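/- There is no two-sided matching mechanism, for markets with at least two workers and two firms, that is both stable (outputs a stable matching for every preference profile) and strategy-proof (no agent can ever strictly improve its match by misreporting). -/
import Mathlib


/- Preferences: strict orders over the other side plus the outside option ⊥ (`none`),
encoded by rank equivalences (higher rank = more preferred). -/
abbrev WPref (m : ℕ) := Option (Fin m) ≃ Fin (m + 1)
abbrev FPref (n : ℕ) := Option (Fin n) ≃ Fin (n + 1)

/-- The partner of worker `w` in a matching described by firm-side assignments. -/
noncomputable def wMatch {n m : ℕ} (A : Fin m → Option (Fin n)) (w : Fin n) :
    Option (Fin m) :=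
  if h : ∃ f, A f = some w then some h.choose else none

/-- rank function: two acceptable partners (indices 0 and 1), `s = true` means index 0 top. -/
def rkTwo (k : ℕ) (hk : 2 ≤ k) (s : Bool) : Option (Fin k) → Fin (k + 1)
  | none => ⟨k - 2, by omega⟩
  | some x =>
      if x.val = 0 then (if s then ⟨k, by omega⟩ else ⟨k - 1, by omega⟩)
      else if x.val = 1 then (if s then ⟨k - 1, by omega⟩ else ⟨k, by omega⟩)
      else ⟨x.val - 2, by omega⟩

lemma rkTwo_inj (k : ℕ) (hk : 2 ≤ k) (s : Bool) : Function.Injective (rkTwo k hk s) := by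
  intro a b hab
  match a, b with
  | none, none => rfl
  | none, some y =>
      have hy := y.2
      simp only [rkTwo] at hab
      split_ifs at hab <;> (rw [Fin.ext_iff] at hab; simp only [Fin.val_mk] at hab) <;>
        (exfalso; omega)
  | some x, none =>
      have hx := x.2
      simp only [rkTwo] at hab
      split_ifs at hab <;> (rw [Fin.ext_iff] at hab; simp only [Fin.val_mk] at hab) <;>
        (exfalso; omega)
  | some x, some y =>
      have hx := x.2; have hy := y.2
      simp only [rkTwo] at hab
      split_ifs at hab <;> (rw [Fin.ext_iff] at hab; simp only [Fin.val_mk] at hab) <;>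
        exact congrArg some (Fin.ext (by omega))

/-- preference with exactly two acceptable partners, indices 0 and 1. -/
noncomputable def pTwo {k : ℕ} (hk : 2 ≤ k) (s : Bool) : Option (Fin k) ≃ Fin (k + 1) :=
  Equiv.ofBijective _ ((Fintype.bijective_iff_injective_and_card _).mpr
    ⟨rkTwo_inj k hk s, by simp⟩)

/-- rank function: exactly one acceptable partner `t`. -/
def rkOne {k : ℕ} (t : Fin k) : Option (Fin k) → Fin (k + 1)
  | none => ⟨k - 1, by omega⟩
  | some x =>
      if x.val = t.val then ⟨k, by omega⟩
      else if x.val < t.val then ⟨x.val, by omega⟩ else ⟨x.val - 1, by omega⟩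

lemma rkOne_inj {k : ℕ} (t : Fin k) : Function.Injective (rkOne t) := by
  have ht := t.2
  intro a b hab
  match a, b with
  | none, none => rfl
  | none, some y =>
      have hy := y.2
      simp only [rkOne] at hab
      split_ifs at hab <;> (rw [Fin.ext_iff] at hab; simp only [Fin.val_mk] at hab) <;>
        (exfalso; omega)
  | some x, none =>
      have hx := x.2
      simp only [rkOne] at hab
      split_ifs at hab <;> (rw [Fin.ext_iff] at hab; simp only [Fin.val_mk] at hab) <;>
        (exfalso; omega)
  | some x, some y =>
      have hx := x.2; have hy := y.2
      simp only [rkOne] at hab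
      split_ifs at hab <;> (rw [Fin.ext_iff] at hab; simp only [Fin.val_mk] at hab) <;>
        exact congrArg some (Fin.ext (by omega))

/-- preference with exactly one acceptable partner `t`. -/
noncomputable def pOne {k : ℕ} (t : Fin k) : Option (Fin k) ≃ Fin (k + 1) :=
  Equiv.ofBijective _ ((Fintype.bijective_iff_injective_and_card _).mpr
    ⟨rkOne_inj t, by simp⟩)

/-- preference where being unmatched is top. -/
def rkNone (k : ℕ) : Option (Fin k) → Fin (k + 1)
  | none => ⟨k, by omega⟩
  | some x => ⟨x.val, by omega⟩

lemma rkNone_inj (k : ℕ) : Function.Injective (rkNone k) := by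
  intro a b hab
  match a, b with
  | none, none => rfl
  | none, some y =>
      have := y.2
      simp only [rkNone] at hab
      rw [Fin.ext_iff] at hab; simp only [Fin.val_mk] at hab; exfalso; omega
  | some x, none =>
      have := x.2
      simp only [rkNone] at hab
      rw [Fin.ext_iff] at hab; simp only [Fin.val_mk] at hab; exfalso; omega
  | some x, some y =>
      simp only [rkNone] at hab
      rw [Fin.ext_iff] at hab; simp only [Fin.val_mk] at hab
      exact congrArg some (Fin.ext hab)

noncomputable def pNone (k : ℕ) : Option (Fin k) ≃ Fin (k + 1) :=
  Equiv.ofBijective _ ((Fintype.bijective_iff_injective_and_card _).mpr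
    ⟨rkNone_inj k, by simp⟩)

lemma pTwo_apply {k : ℕ} (hk : 2 ≤ k) (s : Bool) (a : Option (Fin k)) :
    pTwo hk s a = rkTwo k hk s a := rfl
lemma pOne_apply {k : ℕ} (t : Fin k) (a : Option (Fin k)) :
    pOne t a = rkOne t a := rfl
lemma pNone_apply (k : ℕ) (a : Option (Fin k)) :
    pNone k a = rkNone k a := rfl

/-- True worker preferences: worker 0: f0 > f1 > ⊥; worker 1: f1 > f0 > ⊥; others: ⊥ top. -/
noncomputable def PW (n m : ℕ) (hm : 2 ≤ m) : Fin n → WPref m :=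
  fun w => if w.val = 0 then pTwo hm true else if w.val = 1 then pTwo hm false else pNone m

/-- True firm preferences: firm 0: w1 > w0 > ⊥; firm 1: w0 > w1 > ⊥; others: ⊥ top. -/
noncomputable def FP (n m : ℕ) (hn : 2 ≤ n) : Fin m → FPref n :=
  fun f => if f.val = 0 then pTwo hn false else if f.val = 1 then pTwo hn true else pNone n

/-- Dubins–Freedman/Roth impossibility: for markets with at least two workers and two
firms, there is no deterministic matching mechanism that is both stable (individually
rational and with no blocking pair at every profile) and strategy-proof (no worker or
firm can ever strictly improve its match, w.r.t. its true preferences, by misreporting). -/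
theorem no_stable_and_strategyproof_mechanism (n m : ℕ) (hn : 2 ≤ n) (hm : 2 ≤ m) :
    ¬ ∃ M : (Fin n → WPref m) → (Fin m → FPref n) → (Fin m → Option (Fin n)),
      -- `M` outputs a matching: each worker is matched to at most one firm
      (∀ pw fp f f' w, M pw fp f = some w → M pw fp f' = some w → f = f') ∧
      -- stability: individual rationality
      (∀ pw fp w f, M pw fp f = some w →
        pw w (some f) > pw w none ∧ fp f (some w) > fp f none) ∧
      -- stability: no blocking pair
      (∀ pw fp, ¬ ∃ w f,
        pw w (some f) > pw w none ∧ fp f (some w) > fp f none ∧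
        (∀ f', M pw fp f' = some w → pw w (some f) > pw w (some f')) ∧
        (∀ w', M pw fp f = some w' → fp f (some w) > fp f (some w'))) ∧
      -- strategy-proofness for firms
      (∀ (pw : Fin n → WPref m) (fp : Fin m → FPref n) (f : Fin m) (e' : FPref n),
        fp f (M pw fp f) ≥ fp f (M pw (Function.update fp f e') f)) ∧
      -- strategy-proofness for workers
      (∀ (pw : Fin n → WPref m) (fp : Fin m → FPref n) (w : Fin n) (e' : WPref m),
        pw w (wMatch (M pw fp) w) ≥ pw w (wMatch (M (Function.update pw w e') fp) w)) := by
  rintro ⟨M, hU, hIR, hNB, hspF, hspW⟩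
  classical
  obtain ⟨w0, hw0⟩ : ∃ w : Fin n, w.val = 0 := ⟨⟨0, by omega⟩, rfl⟩
  obtain ⟨w1, hw1⟩ : ∃ w : Fin n, w.val = 1 := ⟨⟨1, by omega⟩, rfl⟩
  obtain ⟨f0, hf0⟩ : ∃ f : Fin m, f.val = 0 := ⟨⟨0, by omega⟩, rfl⟩
  obtain ⟨f1, hf1⟩ : ∃ f : Fin m, f.val = 1 := ⟨⟨1, by omega⟩, rfl⟩
  have hww : w0 ≠ w1 := by intro h; rw [Fin.ext_iff, hw0, hw1] at h; omega
  have hff : f0 ≠ f1 := by intro h; rw [Fin.ext_iff, hf0, hf1] at h; omega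
  -- firms with ⊥-top preferences are unmatched
  have hExtraF : ∀ pw (fp : Fin m → FPref n) f, fp f = pNone n → M pw fp f = none := by
    intro pw fp f hf
    cases hA : M pw fp f with
    | none => rfl
    | some w =>
      have h := (hIR pw fp w f hA).2
      rw [hf] at h
      have hw := w.2
      rw [gt_iff_lt, Fin.lt_def, pNone_apply, pNone_apply] at h
      simp only [rkNone, Fin.val_mk] at h
      omega
  -- workers with ⊥-top preferences are unmatched
  have hExtraW : ∀ (pw : Fin n → WPref m) fp w f, pw w = pNone m → M pw fp f ≠ some w := by
    intro pw fp w f hw hA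
    have h := (hIR pw fp w f hA).1
    rw [hw] at h
    have hf := f.2
    rw [gt_iff_lt, Fin.lt_def, pNone_apply, pNone_apply] at h
    simp only [rkNone, Fin.val_mk] at h
    omega
  -- wMatch computation
  have hwm : ∀ (pw : Fin n → WPref m) (fp : Fin m → FPref n) (w : Fin n) (f : Fin m),
      M pw fp f = some w → wMatch (M pw fp) w = some f := by
    intro pw fp w f h
    have hex : ∃ f', M pw fp f' = some w := ⟨f, h⟩
    rw [wMatch, dif_pos hex]
    exact congrArg some (hU pw fp _ _ _ hex.choose_spec h)
  -- any matched worker is w0 or w1 (trichotomy)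
  have hTri : ∀ (pw : Fin n → WPref m) (fp : Fin m → FPref n),
      (∀ w : Fin n, 2 ≤ w.val → pw w = pNone m) →
      ∀ f, M pw fp f = none ∨ M pw fp f = some w0 ∨ M pw fp f = some w1 := by
    intro pw fp hE f
    cases hA : M pw fp f with
    | none => exact Or.inl rfl
    | some w =>
      by_cases h2 : 2 ≤ w.val
      · exact absurd hA (hExtraW pw fp w f (hE w h2))
      · have hw' : w.val = 0 ∨ w.val = 1 := by omega
        rcases hw' with h' | h'
        · exact Or.inr (Or.inl (congrArg some (Fin.ext (by omega))))
        · exact Or.inr (Or.inr (congrArg some (Fin.ext (by omega))))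
  -- any firm matching some worker is f0 or f1
  have hFClass : ∀ (pw : Fin n → WPref m) (fp : Fin m → FPref n),
      (∀ f : Fin m, 2 ≤ f.val → fp f = pNone n) →
      ∀ f w, M pw fp f = some w → f = f0 ∨ f = f1 := by
    intro pw fp hE f w h
    by_cases h2 : 2 ≤ f.val
    · rw [hExtraF pw fp f (hE f h2)] at h; exact absurd h (by simp)
    · have hf' : f.val = 0 ∨ f.val = 1 := by omega
      rcases hf' with h' | h'
      · exact Or.inl (Fin.ext (by omega))
      · exact Or.inr (Fin.ext (by omega))
  -- facts about the true profile
  set P := PW n m hm with hPdef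
  set F := FP n m hn with hFdef
  have hpwE : ∀ w : Fin n, 2 ≤ w.val → P w = pNone m := by
    intro w hw; rw [hPdef, PW]; rw [if_neg (by omega), if_neg (by omega)]
  have hfpE : ∀ f : Fin m, 2 ≤ f.val → F f = pNone n := by
    intro f hf; rw [hFdef, FP]; rw [if_neg (by omega), if_neg (by omega)]
  have hPW0 : P w0 = pTwo hm true := by rw [hPdef, PW]; rw [if_pos hw0]
  have hPW1 : P w1 = pTwo hm false := by rw [hPdef, PW]; rw [if_neg (by omega), if_pos hw1]
  have hFP0 : F f0 = pTwo hn false := by rw [hFdef, FP]; rw [if_pos hf0]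
  have hFP1 : F f1 = pTwo hn true := by rw [hFdef, FP]; rw [if_neg (by omega), if_pos hf1]
  -- dichotomy: the mechanism outputs one of the two stable matchings at the true profile
  have hdich : (M P F f0 = some w0 ∧ M P F f1 = some w1) ∨
      (M P F f0 = some w1 ∧ M P F f1 = some w0) := by
    rcases hTri P F hpwE f0 with hA0 | hA0 | hA0
    · -- f0 unmatched: (w0, f0) blocks
      exfalso
      refine hNB P F ⟨w0, f0, ?_, ?_, ?_, ?_⟩
      · rw [hPW0]; simp [pTwo_apply, rkTwo, hf0, Fin.lt_def] <;> omega
      · rw [hFP0]; simp [pTwo_apply, rkTwo, hw0, Fin.lt_def] <;> omega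
      · intro f' h
        rcases hFClass P F hfpE f' w0 h with rfl | rfl
        · rw [hA0] at h; exact absurd h (by simp)
        · rw [hPW0]; simp [pTwo_apply, rkTwo, hf0, hf1, Fin.lt_def] <;> omega
      · intro w' h; rw [hA0] at h; exact absurd h (by simp)
    · -- f0 matched to w0
      rcases hTri P F hpwE f1 with hA1 | hA1 | hA1
      · -- f1 unmatched: (w1, f1) blocks
        exfalso
        refine hNB P F ⟨w1, f1, ?_, ?_, ?_, ?_⟩
        · rw [hPW1]; simp [pTwo_apply, rkTwo, hf1, Fin.lt_def] <;> omega
        · rw [hFP1]; simp [pTwo_apply, rkTwo, hw1, Fin.lt_def] <;> omega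
        · intro f' h
          rcases hFClass P F hfpE f' w1 h with rfl | rfl
          · rw [hA0] at h
            exact absurd (congrArg some (Option.some_injective _ h.symm)) (by
              intro h'; exact hww (Option.some_injective _ h'.symm))
          · rw [hA1] at h; exact absurd h (by simp)
        · intro w' h; rw [hA1] at h; exact absurd h (by simp)
      · exact absurd (hU P F f0 f1 w0 hA0 hA1) hff
      · exact Or.inl ⟨hA0, hA1⟩
    · -- f0 matched to w1
      rcases hTri P F hpwE f1 with hA1 | hA1 | hA1
      · -- f1 unmatched: (w0, f1) blocks
        exfalso
        refine hNB P F ⟨w0, f1, ?_, ?_, ?_, ?_⟩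
        · rw [hPW0]; simp [pTwo_apply, rkTwo, hf1, Fin.lt_def] <;> omega
        · rw [hFP1]; simp [pTwo_apply, rkTwo, hw0, Fin.lt_def] <;> omega
        · intro f' h
          rcases hFClass P F hfpE f' w0 h with rfl | rfl
          · rw [hA0] at h
            exact absurd (Option.some_injective _ h) hww.symm
          · rw [hA1] at h; exact absurd h (by simp)
        · intro w' h; rw [hA1] at h; exact absurd h (by simp)
      · exact Or.inr ⟨hA0, hA1⟩
      · exact absurd (hU P F f0 f1 w1 hA0 hA1) hff
  rcases hdich with ⟨hA0, hA1⟩ | ⟨hA0, hA1⟩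
  · -- worker-optimal outcome: firm f0 misreports "only w1 acceptable"
    set F' := Function.update F f0 (pOne w1) with hF'def
    have hF'0 : F' f0 = pOne w1 := by rw [hF'def]; exact Function.update_self _ _ _
    have hF'1 : F' f1 = pTwo hn true := by
      rw [hF'def, Function.update_of_ne hff.symm, hFP1]
    have hF'E : ∀ f : Fin m, 2 ≤ f.val → F' f = pNone n := by
      intro f hf
      rw [hF'def, Function.update_of_ne (by intro h; rw [Fin.ext_iff, hf0] at h; omega)]
      exact hfpE f hf
    -- firm f0 cannot be matched to w0 under its misreport (not IR)
    have hB0w0 : M P F' f0 ≠ some w0 := by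
      intro h
      have h2 := (hIR P F' w0 f0 h).2
      rw [hF'0] at h2
      rw [gt_iff_lt, Fin.lt_def, pOne_apply, pOne_apply] at h2
      simp only [rkOne, hw0, hw1, Fin.val_mk] at h2
      norm_num at h2
    -- under the misreport, f0 is matched to w1
    have hB0 : M P F' f0 = some w1 := by
      rcases hTri P F' hpwE f0 with h0 | h0 | h0
      · exfalso
        rcases hTri P F' hpwE f1 with h1 | h1 | h1
        · -- block (w1, f0)
          refine hNB P F' ⟨w1, f0, ?_, ?_, ?_, ?_⟩
          · rw [hPW1]; simp [pTwo_apply, rkTwo, hf0, Fin.lt_def] <;> omega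
          · rw [hF'0]; simp [pOne_apply, rkOne, hw1, Fin.lt_def] <;> omega
          · intro f' h
            rcases hFClass P F' hF'E f' w1 h with rfl | rfl
            · rw [h0] at h; exact absurd h (by simp)
            · rw [h1] at h; exact absurd h (by simp)
          · intro w' h; rw [h0] at h; exact absurd h (by simp)
        · -- B f1 = some w0 : block (w1, f0)
          refine hNB P F' ⟨w1, f0, ?_, ?_, ?_, ?_⟩
          · rw [hPW1]; simp [pTwo_apply, rkTwo, hf0, Fin.lt_def] <;> omega
          · rw [hF'0]; simp [pOne_apply, rkOne, hw1, Fin.lt_def] <;> omega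
          · intro f' h
            rcases hFClass P F' hF'E f' w1 h with rfl | rfl
            · rw [h0] at h; exact absurd h (by simp)
            · rw [h1] at h
              exact absurd (Option.some_injective _ h) hww
          · intro w' h; rw [h0] at h; exact absurd h (by simp)
        · -- B f1 = some w1 : block (w0, f1)
          refine hNB P F' ⟨w0, f1, ?_, ?_, ?_, ?_⟩
          · rw [hPW0]; simp [pTwo_apply, rkTwo, hf1, Fin.lt_def] <;> omega
          · rw [hF'1]; simp [pTwo_apply, rkTwo, hw0, Fin.lt_def] <;> omega
          · intro f' h
            rcases hFClass P F' hF'E f' w0 h with rfl | rfl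
            · rw [h0] at h; exact absurd h (by simp)
            · rw [h1] at h
              exact absurd (Option.some_injective _ h) hww.symm
          · intro w' h
            rw [h1] at h
            have : w' = w1 := (Option.some_injective _ h.symm)
            subst this
            rw [hF'1]; simp [pTwo_apply, rkTwo, hw0, hw1, Fin.lt_def] <;> omega
      · exact absurd h0 hB0w0
      · exact h0
    -- strategy-proofness for firms is violated
    have hsp := hspF P F f0 (pOne w1)
    rw [hA0, ← hF'def, hB0, hFP0] at hsp
    rw [ge_iff_le, Fin.le_def, pTwo_apply, pTwo_apply] at hsp
    simp only [rkTwo, hw0, hw1, Fin.val_mk] at hsp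
    norm_num at hsp
    omega
  · -- firm-optimal outcome: worker w0 misreports "only f0 acceptable"
    set P' := Function.update P w0 (pOne f0) with hP'def
    have hP'0 : P' w0 = pOne f0 := by rw [hP'def]; exact Function.update_self _ _ _
    have hP'1 : P' w1 = pTwo hm false := by
      rw [hP'def, Function.update_of_ne hww.symm, hPW1]
    have hP'E : ∀ w : Fin n, 2 ≤ w.val → P' w = pNone m := by
      intro w hw
      rw [hP'def, Function.update_of_ne (by intro h; rw [Fin.ext_iff, hw0] at h; omega)]
      exact hpwE w hw
    -- worker w0 cannot be matched to f1 under its misreport (not IR)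
    have hB1w0 : M P' F f1 ≠ some w0 := by
      intro h
      have h2 := (hIR P' F w0 f1 h).1
      rw [hP'0] at h2
      rw [gt_iff_lt, Fin.lt_def, pOne_apply, pOne_apply] at h2
      simp only [rkOne, hf0, hf1, Fin.val_mk] at h2
      norm_num at h2
    -- under the misreport, w0 is matched to f0
    have hB0 : M P' F f0 = some w0 := by
      rcases hTri P' F hP'E f0 with h0 | h0 | h0
      · exfalso
        -- block (w0, f0)
        refine hNB P' F ⟨w0, f0, ?_, ?_, ?_, ?_⟩
        · rw [hP'0]; simp [pOne_apply, rkOne, hf0, Fin.lt_def] <;> omega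
        · rw [hFP0]; simp [pTwo_apply, rkTwo, hw0, Fin.lt_def] <;> omega
        · intro f' h
          rcases hFClass P' F hfpE f' w0 h with rfl | rfl
          · rw [h0] at h; exact absurd h (by simp)
          · exact absurd h hB1w0
        · intro w' h; rw [h0] at h; exact absurd h (by simp)
      · exact h0
      · exfalso
        -- B f0 = some w1 ; then B f1 = none, and (w1, f1) blocks
        have hB1 : M P' F f1 = none := by
          rcases hTri P' F hP'E f1 with h1 | h1 | h1
          · exact h1
          · exact absurd h1 hB1w0
          · exact absurd (hU P' F f0 f1 w1 h0 h1) hff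
        refine hNB P' F ⟨w1, f1, ?_, ?_, ?_, ?_⟩
        · rw [hP'1]; simp [pTwo_apply, rkTwo, hf1, Fin.lt_def] <;> omega
        · rw [hFP1]; simp [pTwo_apply, rkTwo, hw1, Fin.lt_def] <;> omega
        · intro f' h
          rcases hFClass P' F hfpE f' w1 h with rfl | rfl
          · rw [hP'1]; simp [pTwo_apply, rkTwo, hf0, hf1, Fin.lt_def] <;> omega
          · rw [hB1] at h; exact absurd h (by simp)
        · intro w' h; rw [hB1] at h; exact absurd h (by simp)
    -- strategy-proofness for workers is violated
    have hsp := hspW P F w0 (pOne f0)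
    rw [hwm P F w0 f1 hA1, ← hP'def, hwm P' F w0 f0 hB0, hPW0] at hsp
    rw [ge_iff_le, Fin.le_def, pTwo_apply, pTwo_apply] at hsp
    simp only [rkTwo, hf0, hf1, Fin.val_mk] at hsp
    norm_num at hsp
    omega
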